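/- Let f ∈ Γ_0(H), and let L : H' → H be a bounded linear operator with L ∘ L* = ν·Id for some ν > 0. Then prox_{f∘L} = Id + ν^{-1} L* ∘ (prox_{νf} − Id) ∘ L. -/

import Mathlib

noncomputable section

/-- The subdifferential of an extended-real-valued function at y. -/
def subdiff {E : Type*} [NormedAddCommGroup E] [InnerProductSpace ℝ E]
    (f : E → EReal) (y : E) : Set E :=
  {u | ∀ z : E, f y + ((inner ℝ u (z - y) : ℝ) : EReal) ≤ f z}

/-- The Moreau objective z ↦ ½‖z − x‖² + f(z). -/
def proxObj {E : Type*} [NormedAddCommGroup E] [InnerProductSpace ℝ E]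
    (f : E → EReal) (x z : E) : EReal :=
  (((1 / 2 : ℝ) * ‖z - x‖ ^ 2 : ℝ) : EReal) + f z

/-- P is the proximal operator of f : for every x, P x is the unique minimizer
of the Moreau objective. -/
def IsProxOf {E : Type*} [NormedAddCommGroup E] [InnerProductSpace ℝ E]
    (f : E → EReal) (P : E → E) : Prop :=
  ∀ x : E, (∀ z : E, proxObj f x (P x) ≤ proxObj f x z) ∧
    (∀ z : E, (∀ w : E, proxObj f x z ≤ proxObj f x w) → z = P x)

/-- f belongs to Γ₀(E): proper, lower semicontinuous and convex,
never taking the value −∞. -/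
def Gamma0 {E : Type*} [NormedAddCommGroup E] [InnerProductSpace ℝ E]
    (f : E → EReal) : Prop :=
  LowerSemicontinuous f ∧ (∃ x, f x ≠ ⊤) ∧ (∀ x, f x ≠ ⊥) ∧
    ∀ (x y : E) (a b : ℝ), 0 ≤ a → 0 ≤ b → a + b = 1 →
      f (a • x + b • y) ≤ (a : EReal) * f x + (b : EReal) * f y

/-- if L ∘ L* = ν Id, then prox_{f∘L} = Id + ν⁻¹ L* ∘ (prox_{νf} − Id) ∘ L. -/
theorem prox_comp_linear {H H' : Type*}
    [NormedAddCommGroup H] [InnerProductSpace ℝ H] [CompleteSpace H]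
    [NormedAddCommGroup H'] [InnerProductSpace ℝ H'] [CompleteSpace H']
    (f : H → EReal) (hf : Gamma0 f) (L : H' →L[ℝ] H) (ν : ℝ) (hν : 0 < ν)
    (hLL : ∀ y : H, L (ContinuousLinearMap.adjoint L y) = ν • y)
    (Pν : H → H) (hPν : IsProxOf (fun w => ((ν : EReal) * f w)) Pν)
    (P : H' → H') (hP : IsProxOf (fun w => f (L w)) P) :
    ∀ x : H', P x = x + ν⁻¹ • ContinuousLinearMap.adjoint L (Pν (L x) - L x) := by
  intro x
  set A := ContinuousLinearMap.adjoint L with hA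
  set p := Pν (L x) with hp
  set z := x + ν⁻¹ • A (p - L x) with hzdef
  -- adjoint norm identity
  have hAnorm : ∀ v : H, ‖A v‖ ^ 2 = ν * ‖v‖ ^ 2 := by
    intro v
    have h1 : (inner ℝ (A v) (A v) : ℝ) = inner ℝ v (L (A v)) := by
      rw [hA, ContinuousLinearMap.adjoint_inner_left]
    rw [hLL, real_inner_smul_right] at h1
    calc ‖A v‖ ^ 2 = inner ℝ (A v) (A v) := (real_inner_self_eq_norm_sq _).symm
      _ = ν * inner ℝ v v := h1
      _ = ν * ‖v‖ ^ 2 := by rw [real_inner_self_eq_norm_sq]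
  -- L z = p
  have hLz : L z = p := by
    rw [hzdef, map_add, map_smul, hLL, smul_smul, inv_mul_cancel₀ hν.ne', one_smul]
    abel
  -- ν * ½‖z−x‖² = ½‖p − Lx‖²
  have hzx : ν * ((1 / 2) * ‖z - x‖ ^ 2) = (1 / 2) * ‖p - L x‖ ^ 2 := by
    have h1 : z - x = ν⁻¹ • A (p - L x) := by rw [hzdef]; abel
    rw [h1, norm_smul, mul_pow, hAnorm]
    have : |ν⁻¹| = ν⁻¹ := abs_of_pos (by positivity)
    rw [Real.norm_eq_abs, this]
    field_simp
  -- ‖L u‖² ≤ ν ‖u‖²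
  have hB : ∀ u : H', ‖L u‖ ^ 2 ≤ ν * ‖u‖ ^ 2 := by
    intro u
    have h1 : (inner ℝ (L u) (L u) : ℝ) = inner ℝ (A (L u)) u := by
      rw [hA, ContinuousLinearMap.adjoint_inner_left]
    have h2 : (inner ℝ (A (L u)) u : ℝ) ≤ ‖A (L u)‖ * ‖u‖ := real_inner_le_norm _ _
    have h3 : ‖A (L u)‖ ^ 2 = ν * ‖L u‖ ^ 2 := hAnorm _
    have h4 : ‖L u‖ ^ 2 ≤ ‖A (L u)‖ * ‖u‖ := by
      rw [← real_inner_self_eq_norm_sq, h1]; exact h2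
    have h5 : ‖L u‖ ^ 2 * ‖L u‖ ^ 2 ≤ (‖A (L u)‖ * ‖u‖) * (‖A (L u)‖ * ‖u‖) :=
      mul_self_le_mul_self (by positivity) h4
    have h6 : ‖L u‖ ^ 2 * ‖L u‖ ^ 2 ≤ ν * ‖L u‖ ^ 2 * ‖u‖ ^ 2 := by
      calc ‖L u‖ ^ 2 * ‖L u‖ ^ 2 ≤ ‖A (L u)‖ * ‖u‖ * (‖A (L u)‖ * ‖u‖) := h5
        _ = ‖A (L u)‖ ^ 2 * ‖u‖ ^ 2 := by ring
        _ = ν * ‖L u‖ ^ 2 * ‖u‖ ^ 2 := by rw [h3]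
    by_cases hz0 : ‖L u‖ ^ 2 = 0
    · rw [hz0]; positivity
    · have hpos : 0 < ‖L u‖ ^ 2 := lt_of_le_of_ne (sq_nonneg _) (Ne.symm hz0)
      nlinarith [h6, hpos]
  -- z is a minimizer of proxObj (f ∘ L) x
  have hmin : ∀ w : H', proxObj (fun w => f (L w)) x z ≤ proxObj (fun w => f (L w)) x w := by
    intro w
    unfold proxObj
    simp only [hLz]
    by_cases htop : f (L w) = ⊤
    · rw [htop, EReal.add_top_of_ne_bot (EReal.coe_ne_bot _)]; exact le_top
    · have hbot := hf.2.2.1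
      obtain ⟨b, hb⟩ : ∃ b : ℝ, f (L w) = (b : EReal) :=
        ⟨(f (L w)).toReal, (EReal.coe_toReal htop (hbot _)).symm⟩
      have hprox := (hPν (L x)).1 (L w)
      unfold proxObj at hprox
      simp only [← hp] at hprox
      have hptop : f p ≠ ⊤ := by
        intro h
        rw [h, hb, EReal.coe_mul_top_of_pos hν] at hprox
        simp only [EReal.add_top_of_ne_bot (EReal.coe_ne_bot _)] at hprox
        have : ((1 / 2 : ℝ) * ‖L w - L x‖ ^ 2 : ℝ) + (ν * b : ℝ) < (⊤ : EReal) := by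
          rw [← EReal.coe_add]; exact EReal.coe_lt_top _
        rw [← EReal.coe_mul] at hprox
        exact (not_le.mpr this) hprox
      obtain ⟨a, ha⟩ : ∃ a : ℝ, f p = (a : EReal) :=
        ⟨(f p).toReal, (EReal.coe_toReal hptop (hbot _)).symm⟩
      rw [ha, hb] at hprox ⊢
      rw [← EReal.coe_mul, ← EReal.coe_mul, ← EReal.coe_add, ← EReal.coe_add] at hprox
      rw [← EReal.coe_add, ← EReal.coe_add, EReal.coe_le_coe_iff]
      rw [EReal.coe_le_coe_iff] at hprox
      have hLwx : ‖L w - L x‖ ^ 2 ≤ ν * ‖w - x‖ ^ 2 := by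
        have := hB (w - x); rwa [map_sub] at this
      nlinarith [hprox, hzx, hLwx]
  exact ((hP x).2 z hmin).symm

end
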